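/- Let U be a computably enumerable set of binary strings. Then the set {y ∈ 2^ω : for all S ⊆ K^{<ω}, if y ∈ Γ_S then S ∈ [U]^⪯} is a Σ⁰₁ (effectively open) subset of 2^ω; moreover this is uniform in an index for U. -/

import Mathlib

open MeasureTheory
open scoped NNReal ENNReal Classical

/-- `w` is an initial segment of the infinite binary sequence `x`. -/
def PrefixOf (w : List Bool) (x : ℕ → Bool) : Prop :=
  ∀ i < w.length, x i = w.getD i false

/-- The cylinder (basic clopen set) of sequences extending the string `w`. -/
def Cyl (w : List Bool) : Set (ℕ → Bool) := {x | PrefixOf w x}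

/-- The first coordinate where two distinct sequences differ. -/
noncomputable def firstDiff (x y : ℕ → Bool) (h : x ≠ y) : ℕ :=
  Nat.find (show ∃ n, x n ≠ y n from by
    by_contra hc; push_neg at hc; exact h (funext fun n => hc n))

/-- The standard ultrametric on Cantor space, `υ(x,y) = 2^{-min{n : x n ≠ y n}}`. -/
noncomputable def upsilon (x y : ℕ → Bool) : ℝ :=
  if h : x = y then 0 else (2:ℝ) ^ (-(firstDiff x y h : ℝ))

/-- Extended-real-valued version of the ultrametric. -/
noncomputable def upsilonE (x y : ℕ → Bool) : ℝ≥0∞ :=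
  if h : x = y then 0 else (2:ℝ≥0∞) ^ (-(firstDiff x y h : ℝ))

/-- The `γ`-energy `∬ dμ(a) dμ(b) / υ(a,b)^γ` of a measure on Cantor space. -/
noncomputable def energy (γ : ℝ) (μ : Measure (ℕ → Bool)) : ℝ≥0∞ :=
  ∫⁻ a, ∫⁻ b, (upsilonE a b) ^ (-γ) ∂μ ∂μ

/-- `ν` is the product measure putting each index in the random set
independently with probability `p`. -/
def IsBernoulliProduct {α : Type} (ν : Measure (α → Bool)) (p : ℝ≥0∞) : Prop :=
  ∀ F : Finset α, ν {S | ∀ a ∈ F, S a = true} = p ^ F.card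

/-- Binary encoding of a symbol of `K = 2^k` as a length-`k` binary string. -/
def encSym (k : ℕ) (a : Fin (2^k)) : List Bool := List.ofFn fun i : Fin k => Nat.testBit a.val i.val

/-- The map `ι : K^{<ω} → 2^{<ω}` encoding each symbol in binary and concatenating. -/
def encStr (k : ℕ) (σ : List (Fin (2^k))) : List Bool := (σ.map (encSym k)).flatten

/-- `Γ_S`: the closed set of infinite binary paths through the `ι`-image of the
downward (prefix-) closed part of `S ⊆ K^{<ω}`. -/
def GammaS (k : ℕ) (S : List (Fin (2^k)) → Bool) : Set (ℕ → Bool) :=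
  {x | ∀ n : ℕ, ∃ σ : List (Fin (2^k)), σ.length = n ∧
    (∀ τ, τ <+: σ → S τ = true) ∧ PrefixOf (encStr k σ) x}

/-- The open subset `[V]^⪯` of Cantor space determined by a set of strings `V`. -/
def openOf (V : Set (List Bool)) : Set (ℕ → Bool) := {x | ∃ w ∈ V, PrefixOf w x}

/-- A uniformly c.e. family of sets of binary strings. -/
def CEFamily (U : ℕ → Set (List Bool)) : Prop :=
  ∃ G : ℕ × ℕ → Option (List Bool), Computable G ∧
    ∀ n w, w ∈ U n ↔ ∃ s, G (n, s) = some w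

/-- `x` passes every (plain, unrelativized) Martin-Löf test for the measure `μ`:
Martin-Löf/Hippocrates randomness with respect to `μ`. -/
def PassesPlainTests (μ : Measure (ℕ → Bool)) (x : ℕ → Bool) : Prop :=
  ∀ U : ℕ → Set (List Bool), CEFamily U →
    (∀ n, μ (openOf (U n)) ≤ ((2:ℝ≥0∞) ^ n)⁻¹) → x ∉ ⋂ n, openOf (U n)

/-- Value of a binary string read as a binary number (last bit most significant). -/
def bitsToNat (l : List Bool) : ℕ := l.foldr (fun b acc => 2*acc + cond b 1 0) 0

/-- Truth-table reducibility: a total computable functional, given by a computable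
function producing, for each `n`, a finite query list and a truth table. -/
def ttLE (x y : ℕ → Bool) : Prop :=
  ∃ F : ℕ → List ℕ × List Bool, Computable F ∧
    ∀ n, x n = (F n).2.getD (bitsToNat ((F n).1.map y)) false

/-- Partial recursiveness in an oracle `O` (Kleene-style, following `Nat.Partrec`). -/
inductive OracleRecursiveIn (O : ℕ →. ℕ) : (ℕ →. ℕ) → Prop
  | oracle : OracleRecursiveIn O O
  | zero : OracleRecursiveIn O (pure 0)
  | succ : OracleRecursiveIn O fun n => Part.some (n + 1)
  | left : OracleRecursiveIn O fun n => Part.some (Nat.unpair n).1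
  | right : OracleRecursiveIn O fun n => Part.some (Nat.unpair n).2
  | pair {f g} : OracleRecursiveIn O f → OracleRecursiveIn O g →
      OracleRecursiveIn O fun n => Nat.pair <$> f n <*> g n
  | comp {f g} : OracleRecursiveIn O f → OracleRecursiveIn O g →
      OracleRecursiveIn O fun n => g n >>= f
  | prec {f g} : OracleRecursiveIn O f → OracleRecursiveIn O g →
      OracleRecursiveIn O (Nat.unpaired fun a n =>
        n.rec (f a) fun y IH => do let i ← IH; g (Nat.pair a (Nat.pair y i)))
  | rfind {f} : OracleRecursiveIn O f →
      OracleRecursiveIn O fun a => Nat.rfind fun n => (fun m => m = 0) <$> f (Nat.pair a n)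

/-- The total oracle corresponding to an infinite binary sequence. -/
def oracleOf (y : ℕ → Bool) : ℕ →. ℕ := fun n => Part.some (cond (y n) 1 0)

/-- Turing reducibility between binary sequences. -/
def turingLE (x y : ℕ → Bool) : Prop := OracleRecursiveIn (oracleOf y) (oracleOf x)

/-- A family of string-sets uniformly c.e. in the oracle `O`. -/
def CEInFamily (O : ℕ →. ℕ) (U : ℕ → Set (List Bool)) : Prop :=
  ∃ p : ℕ →. ℕ, OracleRecursiveIn O p ∧
    ∀ n w, w ∈ U n ↔ (Nat.pair n (Encodable.encode w)) ∈ p.Dom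

/-- `g` is a representation (an encoding as an oracle) of the measure `μ`:
`g (σ, n)` is a rational within `2^{-n}` of `μ([σ])`. -/
def Represents (g : List Bool × ℕ → ℚ) (μ : Measure (ℕ → Bool)) : Prop :=
  ∀ σ n, |(g (σ, n) : ℝ) - (μ (Cyl σ)).toReal| ≤ (2:ℝ) ^ (-(n:ℝ))

/-- The oracle determined by a representation `g` of a measure. -/
noncomputable def oracleOfRep (g : List Bool × ℕ → ℚ) : ℕ →. ℕ := fun n =>
  Part.some (Encodable.encode ((Encodable.decode (α := List Bool × ℕ) n).map g))

/-- `x` is `μ`-random: it passes every `μ`-relativized Martin-Löf test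
(uniformly c.e. in any representation of `μ`). -/
def MuRandom (μ : Measure (ℕ → Bool)) (x : ℕ → Bool) : Prop :=
  ∀ g : List Bool × ℕ → ℚ, Represents g μ →
    ∀ U : ℕ → Set (List Bool), CEInFamily (oracleOfRep g) U →
      (∀ n, μ (openOf (U n)) ≤ ((2:ℝ≥0∞) ^ n)⁻¹) → x ∉ ⋂ n, openOf (U n)

/-- The `γ`-weight of a set of strings. -/
noncomputable def wt (γ : ℝ) (C : Set (List Bool)) : ℝ≥0∞ :=
  ∑' w : C, (2:ℝ≥0∞) ^ (-(γ * ((w : List Bool)).length))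

/-- `x` is `γ`-random: it passes every Martin-Löf `γ`-test. -/
def GammaRandom (γ : ℝ) (x : ℕ → Bool) : Prop :=
  ∀ U : ℕ → Set (List Bool), CEFamily U →
    (∀ n, wt γ (U n) ≤ ((2:ℝ≥0∞) ^ n)⁻¹) → x ∉ ⋂ n, openOf (U n)


section Stmt10Helpers

open List in
private lemma bitsToNat_cons (b : Bool) (l : List Bool) :
    bitsToNat (b :: l) = 2 * bitsToNat l + cond b 1 0 := rfl

private lemma bitsToNat_lt (l : List Bool) : bitsToNat l < 2 ^ l.length := by
  induction l with
  | nil => simp [bitsToNat]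
  | cons b t ih =>
    have hb : (cond b 1 0 : ℕ) ≤ 1 := by cases b <;> simp
    rw [bitsToNat_cons, List.length_cons, pow_succ]
    omega

private lemma testBit_bitsToNat (l : List Bool) (i : ℕ) :
    (bitsToNat l).testBit i = l.getD i false := by
  induction l generalizing i with
  | nil => simp [bitsToNat]
  | cons b t ih =>
    cases i with
    | zero =>
      rw [bitsToNat_cons, Nat.testBit_zero]
      cases b <;> simp [Nat.mul_add_mod]
    | succ i =>
      rw [bitsToNat_cons, Nat.testBit_succ]
      have : (2 * bitsToNat t + cond b 1 0) / 2 = bitsToNat t := by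
        have hb : (cond b 1 0 : ℕ) ≤ 1 := by cases b <;> simp
        omega
      rw [this, ih]
      rfl

private lemma encSym_length (k : ℕ) (a : Fin (2 ^ k)) : (encSym k a).length = k := by
  simp [encSym]

private lemma encSym_getElem (k : ℕ) (a : Fin (2 ^ k)) (i : ℕ) (h : i < k) :
    (encSym k a)[i]'(by simpa [encSym_length]) = Nat.testBit a.val i := by
  simp [encSym]

private lemma bitsToNat_encSym (k : ℕ) (a : Fin (2 ^ k)) :
    bitsToNat (encSym k a) = a.val := by
  apply Nat.eq_of_testBit_eq
  intro i
  rw [testBit_bitsToNat]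
  by_cases h : i < k
  · rw [List.getD_eq_getElem _ _ (by simpa [encSym_length]), encSym_getElem k a i h]
  · rw [List.getD_eq_default _ _ (by simpa [encSym_length] using not_lt.mp h)]
    exact (Nat.testBit_lt_two_pow (lt_of_lt_of_le a.isLt (Nat.pow_le_pow_right (by norm_num) (not_lt.mp h)))).symm

private lemma encSym_injective (k : ℕ) : Function.Injective (encSym k) := by
  intro a b h
  have := congrArg bitsToNat h
  rw [bitsToNat_encSym, bitsToNat_encSym] at this
  exact Fin.ext this

private lemma encSym_bitsToNat (k : ℕ) (l : List Bool) (hl : l.length = k)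
    (hlt : bitsToNat l < 2 ^ k) :
    encSym k ⟨bitsToNat l, hlt⟩ = l := by
  apply List.ext_getElem (by simp [encSym_length, hl])
  intro i h1 h2
  rw [encSym_getElem k _ i (by simpa [encSym_length] using h1), testBit_bitsToNat,
    List.getD_eq_getElem _ _ h2]

private lemma encStr_nil (k : ℕ) : encStr k [] = [] := rfl

private lemma encStr_cons (k : ℕ) (a : Fin (2 ^ k)) (σ : List (Fin (2 ^ k))) :
    encStr k (a :: σ) = encSym k a ++ encStr k σ := by
  simp [encStr]

private lemma encStr_append (k : ℕ) (σ τ : List (Fin (2 ^ k))) :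
    encStr k (σ ++ τ) = encStr k σ ++ encStr k τ := by
  simp [encStr]

private lemma encStr_length (k : ℕ) (σ : List (Fin (2 ^ k))) :
    (encStr k σ).length = k * σ.length := by
  induction σ with
  | nil => simp [encStr]
  | cons a σ ih =>
    rw [encStr_cons, List.length_append, encSym_length, ih, List.length_cons, Nat.mul_succ]
    omega

private lemma encStr_injective (k : ℕ) (hk : 1 ≤ k) : Function.Injective (encStr k) := by
  intro σ τ h
  induction σ generalizing τ with
  | nil =>
    cases τ with
    | nil => rfl
    | cons b τ =>
      exfalso
      have := congrArg List.length h
      rw [encStr_length, encStr_length] at this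
      simp at this
      omega
  | cons a σ ih =>
    cases τ with
    | nil =>
      exfalso
      have := congrArg List.length h
      rw [encStr_length, encStr_length] at this
      simp at this
      omega
    | cons b τ =>
      rw [encStr_cons, encStr_cons] at h
      obtain ⟨h1, h2⟩ := List.append_inj h (by rw [encSym_length, encSym_length])
      rw [encSym_injective k h1, ih h2]

private lemma exists_encStr (k : ℕ) (hk : 1 ≤ k) :
    ∀ n (u : List Bool), u.length = k * n → ∃ σ, σ.length = n ∧ encStr k σ = u := by
  intro n
  induction n with
  | zero =>
    intro u hu
    have : u = [] := List.length_eq_zero_iff.mp (by simpa using hu)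
    exact ⟨[], rfl, by simp [this, encStr]⟩
  | succ n ih =>
    intro u hu
    have hK : k ≤ u.length := by rw [hu, Nat.mul_succ]; omega
    have hl : (u.take k).length = k := by rw [List.length_take]; omega
    have hlt : bitsToNat (u.take k) < 2 ^ k := by
      have := bitsToNat_lt (u.take k); rwa [hl] at this
    obtain ⟨σ, hσl, hσ⟩ := ih (u.drop k) (by rw [List.length_drop, hu, Nat.mul_succ]; omega)
    refine ⟨⟨bitsToNat (u.take k), hlt⟩ :: σ, by simp [hσl], ?_⟩
    rw [encStr_cons, encSym_bitsToNat k _ hl hlt, hσ, List.take_append_drop]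

private lemma prefixOf_mono {u w : List Bool} {y : ℕ → Bool} (h : u <+: w)
    (hw : PrefixOf w y) : PrefixOf u y := by
  intro i hi
  obtain ⟨r, rfl⟩ := h
  rw [hw i (lt_of_lt_of_le hi (by simp))]
  exact List.getD_append _ _ _ _ hi

private lemma prefixOf_unique {u v : List Bool} {y : ℕ → Bool} (hu : PrefixOf u y)
    (hv : PrefixOf v y) (h : u.length = v.length) : u = v := by
  apply List.ext_getElem h
  intro i h1 h2
  rw [← List.getD_eq_getElem u false h1, ← List.getD_eq_getElem v false h2,
    ← hu i h1, ← hv i h2]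

private lemma encStr_prefix_mono (k : ℕ) {τ σ : List (Fin (2 ^ k))} (h : τ <+: σ) :
    encStr k τ <+: encStr k σ := by
  obtain ⟨ρ, rfl⟩ := h
  rw [encStr_append]
  exact List.prefix_append _ _

private lemma mem_gammaS_iff (k : ℕ) (hk : 1 ≤ k) (S : List (Fin (2 ^ k)) → Bool)
    (y : ℕ → Bool) :
    y ∈ GammaS k S ↔ ∀ σ, PrefixOf (encStr k σ) y → S σ = true := by
  constructor
  · intro hy σ hσ
    obtain ⟨σ', hlen, hS, hp'⟩ := hy σ.length
    have heq : encStr k σ' = encStr k σ :=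
      prefixOf_unique hp' hσ (by rw [encStr_length, encStr_length, hlen])
    have : σ' = σ := encStr_injective k hk heq
    exact this ▸ hS σ' (List.prefix_refl σ')
  · intro h n
    set u : List Bool := List.ofFn (fun i : Fin (k * n) => y i.val) with hu
    have hulen : u.length = k * n := by simp [hu]
    have hupf : PrefixOf u y := by
      intro i hi
      rw [hulen] at hi
      rw [List.getD_eq_getElem _ _ (by simpa [hulen])]
      simp [hu]
    obtain ⟨σ, hσl, hσ⟩ := exists_encStr k hk n u hulen
    exact ⟨σ, hσl, fun τ hτ => h τ (prefixOf_mono (hσ ▸ encStr_prefix_mono k hτ) hupf),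
      hσ ▸ hupf⟩

end Stmt10Helpers


section Stmt10Comp

private noncomputable def finv (k : ℕ) (f : ℕ → List (Fin (2 ^ k))) (u : List Bool) : ℕ :=
  if h : ∃ m, encStr k (f m) = u.take (k * (u.length / k)) then Nat.find h else 0

private lemma finv_ex (k : ℕ) (hk : 1 ≤ k) (f : ℕ → List (Fin (2 ^ k)))
    (hfs : Function.Surjective f) (u : List Bool) :
    ∃ m, encStr k (f m) = u.take (k * (u.length / k)) := by
  have hle : k * (u.length / k) ≤ u.length := Nat.mul_div_le u.length k
  obtain ⟨σ, -, hσ⟩ := exists_encStr k hk (u.length / k) (u.take (k * (u.length / k)))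
    (by rw [List.length_take]; omega)
  obtain ⟨m, rfl⟩ := hfs σ
  exact ⟨m, hσ⟩

private lemma finv_spec (k : ℕ) (hk : 1 ≤ k) (f : ℕ → List (Fin (2 ^ k)))
    (hfs : Function.Surjective f) (u : List Bool) :
    encStr k (f (finv k f u)) = u.take (k * (u.length / k)) := by
  rw [finv, dif_pos (finv_ex k hk f hfs u)]
  exact Nat.find_spec (finv_ex k hk f hfs u)

private lemma finv_spec' (k : ℕ) (hk : 1 ≤ k) (f : ℕ → List (Fin (2 ^ k)))
    (hfs : Function.Surjective f) (u : List Bool) (n : ℕ) (hu : u.length = k * n) :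
    encStr k (f (finv k f u)) = u := by
  rw [finv_spec k hk f hfs u, hu, Nat.mul_div_cancel_left n (by omega), ← hu,
    List.take_length]

private lemma primrec_encStr (k : ℕ) : Primrec (encStr k) := by
  have h1 : Primrec (encSym k) := Primrec.dom_finite _
  have h2 : Primrec fun σ : List (Fin (2 ^ k)) => σ.map (encSym k) :=
    Primrec.list_map Primrec.id ((h1.comp Primrec.snd).to₂)
  exact Primrec.list_flatten.comp h2

private lemma primrec_take : Primrec₂ (fun (l : List Bool) (n : ℕ) => l.take n) := by
  have h : Primrec fun p : List Bool × ℕ =>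
      (List.range (min p.2 p.1.length)).map fun i => p.1.getD i false :=
    Primrec.list_map
      (Primrec.list_range.comp (Primrec.nat_min.comp Primrec.snd
        (Primrec.list_length.comp Primrec.fst)))
      (((Primrec.list_getD false).comp (Primrec.fst.comp Primrec.fst) Primrec.snd).to₂)
  have h2 : Primrec fun p : List Bool × ℕ => p.1.take p.2 := by
    apply h.of_eq
    rintro ⟨l, n⟩
    apply List.ext_getElem
    · simp [List.length_take, Nat.min_comm]
    · intro i h1 h2
      have hi : i < min n l.length := by simpa using h1
      simp only [List.getElem_map, List.getElem_range, List.getElem_take]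
      exact List.getD_eq_getElem _ _ (lt_of_lt_of_le hi (min_le_right _ _))
  exact h2.to₂

private lemma finv_computable (k : ℕ) (hk : 1 ≤ k) (f : ℕ → List (Fin (2 ^ k)))
    (hfc : Computable f) (hfs : Function.Surjective f) :
    Computable (finv k f) := by
  have htarget : Primrec (fun u : List Bool => u.take (k * (u.length / k))) :=
    primrec_take.comp Primrec.id
      ((Primrec.nat_mul.comp (Primrec.const k)
        (Primrec.nat_div.comp Primrec.list_length (Primrec.const k))))
  have hp : Computable₂ (fun (u : List Bool) (m : ℕ) =>
      decide (encStr k (f m) = u.take (k * (u.length / k)))) := by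
    have h1 : Computable fun p : List Bool × ℕ => encStr k (f p.2) :=
      (primrec_encStr k).to_comp.comp (hfc.comp Computable.snd)
    have h2 : Computable fun p : List Bool × ℕ => p.1.take (k * (p.1.length / k)) :=
      (htarget.comp Primrec.fst).to_comp
    exact (Primrec.eq.decide.to_comp.comp h1 h2).to₂
  have hrf : Partrec fun u : List Bool => Nat.rfind fun m =>
      (Part.some (decide (encStr k (f m) = u.take (k * (u.length / k))) : Bool)) :=
    Partrec.rfind hp.partrec₂
  apply hrf.of_eq_tot
  intro u
  have hex := finv_ex k hk f hfs u
  refine Nat.mem_rfind.mpr ⟨?_, ?_⟩ <;> beta_reduce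
  · rw [Part.mem_some_iff, eq_comm, decide_eq_true_eq]
    exact finv_spec k hk f hfs u
  · intro m hm
    rw [Part.mem_some_iff, eq_comm, decide_eq_false_iff_not]
    rw [finv, dif_pos hex] at hm
    exact Nat.find_min hex hm

private def maxList (l : List ℕ) : ℕ := l.foldr max 0

private lemma le_maxList {a : ℕ} {l : List ℕ} (h : a ∈ l) : a ≤ maxList l := by
  induction l with
  | nil => simp at h
  | cons b t ih =>
    rcases List.mem_cons.mp h with rfl | h
    · exact le_max_left _ _
    · exact le_trans (ih h) (le_max_right _ _)

private lemma primrec_maxList : Primrec maxList := by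
  have := Primrec.list_foldr (Primrec.id (α := List ℕ)) (Primrec.const 0)
    ((Primrec.nat_max.comp (Primrec.fst.comp Primrec.snd)
      (Primrec.snd.comp Primrec.snd)).to₂)
  exact this.of_eq fun l => rfl

private lemma primrec_list_all {α β : Type} [Primcodable α] [Primcodable β]
    {f : α → List β} {p : α → β → Bool} (hf : Primrec f) (hp : Primrec₂ p) :
    Primrec fun a => (f a).all (p a) := by
  have := Primrec.list_foldr hf (Primrec.const true)
    (((Primrec.dom_bool₂ (· && ·)).comp
      (hp.comp Primrec.fst (Primrec.fst.comp Primrec.snd))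
      (Primrec.snd.comp Primrec.snd)).to₂)
  apply this.of_eq
  intro a
  induction f a with
  | nil => rfl
  | cons b t ih => simp [List.all_cons, ih]

private lemma primrec_list_any {α β : Type} [Primcodable α] [Primcodable β]
    {f : α → List β} {p : α → β → Bool} (hf : Primrec f) (hp : Primrec₂ p) :
    Primrec fun a => (f a).any (p a) := by
  have := Primrec.list_foldr hf (Primrec.const false)
    (((Primrec.dom_bool₂ (· || ·)).comp
      (hp.comp Primrec.fst (Primrec.fst.comp Primrec.snd))
      (Primrec.snd.comp Primrec.snd)).to₂)
  apply this.of_eq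
  intro a
  induction f a with
  | nil => rfl
  | cons b t ih => simp [List.any_cons, ih]

private def boolLists : ℕ → List (List Bool) := fun R =>
  Nat.rec [[]] (fun _ ih => ih.flatMap fun t => [false :: t, true :: t]) R

private lemma boolLists_zero : boolLists 0 = [[]] := rfl

private lemma boolLists_succ (R : ℕ) :
    boolLists (R + 1) = (boolLists R).flatMap fun t => [false :: t, true :: t] := rfl

private lemma mem_boolLists {u : List Bool} {R : ℕ} :
    u ∈ boolLists R ↔ u.length = R := by
  induction R generalizing u with
  | zero => simp [boolLists_zero, List.length_eq_zero_iff]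
  | succ R ih =>
    rw [boolLists_succ, List.mem_flatMap]
    constructor
    · rintro ⟨t, ht, hu⟩
      have : u = false :: t ∨ u = true :: t := by simpa using hu
      rcases this with rfl | rfl <;> simp [ih.mp ht]
    · intro hu
      cases u with
      | nil => simp at hu
      | cons b t =>
        refine ⟨t, ih.mpr (by simpa using hu), ?_⟩
        cases b <;> simp

private lemma primrec_boolLists : Primrec boolLists := by
  have hinner : Primrec₂ fun (_ : ℕ × (ℕ × List (List Bool))) (t : List Bool) =>
      [false :: t, true :: t] :=
    ((Primrec.list_cons.comp (Primrec.list_cons.comp (Primrec.const false) Primrec.snd)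
      (Primrec.list_cons.comp (Primrec.list_cons.comp (Primrec.const true) Primrec.snd)
        (Primrec.const []))).to₂)
  have hh : Primrec₂ fun (_ : ℕ) (p : ℕ × List (List Bool)) =>
      p.2.flatMap fun t => [false :: t, true :: t] :=
    ((Primrec.list_flatMap (Primrec.snd.comp Primrec.snd) hinner).to₂)
  exact Primrec.nat_rec' Primrec.id (Primrec.const [[]]) hh

private def checkFun (p : List ℕ × List (List Bool)) : Bool :=
  (boolLists (maxList (p.1.map (· + 1) ++ p.2.map List.length))).all fun t =>
    !(p.1.all fun m => t.getD m false) || p.2.any fun w => decide (t.take w.length = w)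

private lemma primrec_checkFun : Primrec checkFun := by
  have hR : Primrec fun p : List ℕ × List (List Bool) =>
      maxList (p.1.map (· + 1) ++ p.2.map List.length) :=
    primrec_maxList.comp (Primrec.list_append.comp
      (Primrec.list_map Primrec.fst ((Primrec.succ.comp Primrec.snd).to₂))
      (Primrec.list_map Primrec.snd ((Primrec.list_length.comp Primrec.snd).to₂)))
  have houter : Primrec fun p : List ℕ × List (List Bool) =>
      boolLists (maxList (p.1.map (· + 1) ++ p.2.map List.length)) :=
    primrec_boolLists.comp hR
  have hA : Primrec fun q : (List ℕ × List (List Bool)) × List Bool =>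
      !(q.1.1.all fun m => q.2.getD m false) :=
    Primrec.not.comp (primrec_list_all (Primrec.fst.comp Primrec.fst)
      (((Primrec.list_getD false).comp (Primrec.snd.comp Primrec.fst) Primrec.snd).to₂))
  have hB : Primrec fun q : (List ℕ × List (List Bool)) × List Bool =>
      q.1.2.any fun w => decide (q.2.take w.length = w) :=
    primrec_list_any (Primrec.snd.comp Primrec.fst)
      ((Primrec.eq.decide.comp
        (primrec_take.comp (Primrec.snd.comp Primrec.fst)
          (Primrec.list_length.comp Primrec.snd))
        Primrec.snd).to₂)
  exact primrec_list_all houter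
    (((Primrec.dom_bool₂ (· || ·)).comp hA hB).to₂)

private lemma computable_option_toList {α : Type} [Primcodable α] :
    Computable (fun o : Option α => o.toList) := by
  have := Computable.option_casesOn (Computable.id (α := Option α))
    (Computable.const ([] : List α))
    ((Computable.list_cons.comp Computable.snd (Computable.const [])).to₂)
  apply this.of_eq
  intro o
  cases o <;> rfl

private lemma computable_list_map {α β σ : Type} [Primcodable α] [Primcodable β] [Primcodable σ]
    {f : α → List β} {g : α → β → σ} (hf : Computable f) (hg : Computable₂ g) :
    Computable fun a => (f a).map (g a) := by
  have key : ∀ (l : List β) (G : β → σ) (n : ℕ),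
      (Nat.rec [] (fun i ih => ih ++ (l[i]?.map G).toList) n : List σ)
        = (l.take n).map G := by
    intro l G n
    induction n with
    | zero => simp
    | succ n ihn =>
      have hopt : ∀ o : Option β, ((o.map G).toList) = o.toList.map G := by
        intro o; cases o <;> rfl
      have step : (Nat.rec [] (fun i ih => ih ++ (l[i]?.map G).toList) (n + 1) : List σ)
          = (Nat.rec [] (fun i ih => ih ++ (l[i]?.map G).toList) n : List σ)
            ++ (l[n]?.map G).toList := rfl
      rw [step, ihn, hopt, List.take_succ, List.map_append]
  have h1 : Computable fun q : α × ℕ × List σ => (f q.1)[q.2.1]?.map (g q.1) :=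
    Computable.option_map
      (Computable.list_getElem?.comp (hf.comp Computable.fst)
        (Computable.fst.comp Computable.snd))
      (hg.comp₂ ((Computable.fst.comp Computable.fst).to₂) (Computable.snd.to₂))
  have hh : Computable₂ fun (a : α) (p : ℕ × List σ) =>
      p.2 ++ ((f a)[p.1]?.map (g a)).toList :=
    ((Computable.list_append.comp (Computable.snd.comp Computable.snd)
      (computable_option_toList.comp h1)).to₂)
  have F : Computable fun a => (Nat.rec [] (fun i ih =>
      ih ++ ((f a)[i]?.map (g a)).toList) (f a).length : List σ) :=
    Computable.nat_rec (Computable.list_length.comp hf) (Computable.const []) hh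
  apply F.of_eq
  intro a
  rw [key, List.take_length]

private lemma primrec_reduceOption {α : Type} [Primcodable α] :
    Primrec (List.reduceOption : List (Option α) → List α) := by
  have := Primrec.list_foldr (Primrec.id (α := List (Option α)))
    (Primrec.const ([] : List α))
    ((Primrec.option_casesOn (Primrec.fst.comp Primrec.snd) (Primrec.snd.comp Primrec.snd)
      ((Primrec.list_cons.comp Primrec.snd
        (Primrec.snd.comp (Primrec.snd.comp Primrec.fst))).to₂)).to₂)
  apply this.of_eq
  intro l
  show List.foldr (fun (b : Option α) (s : List α) => Option.casesOn b s fun x => x :: s) []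
      l = l.reduceOption
  induction l with
  | nil => rfl
  | cons o t ih =>
    cases o with
    | none => rw [List.reduceOption_cons_of_none]; exact ih
    | some x =>
      rw [List.reduceOption_cons_of_some]
      show x :: _ = x :: _
      rw [ih]

set_option maxHeartbeats 1000000 in
private noncomputable def Hfun (k : ℕ) (f : ℕ → List (Fin (2 ^ k)))
    (G : ℕ × ℕ → Option (List Bool)) (p : ℕ × ℕ) : Option (List Bool) :=
  if checkFun
      ((List.range ((Nat.unpair (Nat.unpair p.2).1).1 + 1)).map fun n =>
        finv k f (((boolLists (k * (Nat.unpair (Nat.unpair p.2).1).1)).getD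
          (Nat.unpair (Nat.unpair p.2).1).2 []).take (k * n)),
       ((List.range ((Nat.unpair p.2).2 + 1)).map fun s' => G (p.1, s')).reduceOption)
  then some ((boolLists (k * (Nat.unpair (Nat.unpair p.2).1).1)).getD
    (Nat.unpair (Nat.unpair p.2).1).2 [])
  else none

set_option maxHeartbeats 400000 in

private lemma computable_Hfun (k : ℕ) (hk : 1 ≤ k) (f : ℕ → List (Fin (2 ^ k)))
    (hfc : Computable f) (hfs : Function.Surjective f)
    (G : ℕ × ℕ → Option (List Bool)) (hG : Computable G) :
    Computable (Hfun k f G) := by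
  have hN : Primrec fun p : ℕ × ℕ => (Nat.unpair (Nat.unpair p.2).1).1 :=
    Primrec.fst.comp (Primrec.unpair.comp (Primrec.fst.comp (Primrec.unpair.comp Primrec.snd)))
  have hj : Primrec fun p : ℕ × ℕ => (Nat.unpair (Nat.unpair p.2).1).2 :=
    Primrec.snd.comp (Primrec.unpair.comp (Primrec.fst.comp (Primrec.unpair.comp Primrec.snd)))
  have hs0 : Primrec fun p : ℕ × ℕ => (Nat.unpair p.2).2 :=
    Primrec.snd.comp (Primrec.unpair.comp Primrec.snd)
  have hv : Primrec fun p : ℕ × ℕ =>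
      (boolLists (k * (Nat.unpair (Nat.unpair p.2).1).1)).getD
        (Nat.unpair (Nat.unpair p.2).1).2 [] :=
    (Primrec.list_getD []).comp
      (primrec_boolLists.comp (Primrec.nat_mul.comp (Primrec.const k) hN)) hj
  have hW : Computable fun p : ℕ × ℕ =>
      ((List.range ((Nat.unpair p.2).2 + 1)).map fun s' => G (p.1, s')).reduceOption := by
    refine primrec_reduceOption.to_comp.comp ?_
    refine computable_list_map ((Primrec.list_range.comp (Primrec.succ.comp hs0)).to_comp) ?_
    exact ((hG.comp ((Computable.fst.comp Computable.fst).pair Computable.snd)).to₂)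
  have hms : Computable fun p : ℕ × ℕ =>
      (List.range ((Nat.unpair (Nat.unpair p.2).1).1 + 1)).map fun n =>
        finv k f (((boolLists (k * (Nat.unpair (Nat.unpair p.2).1).1)).getD
          (Nat.unpair (Nat.unpair p.2).1).2 []).take (k * n)) := by
    have harg : Computable fun q : (ℕ × ℕ) × ℕ =>
        (((boolLists (k * (Nat.unpair (Nat.unpair q.1.2).1).1)).getD
          (Nat.unpair (Nat.unpair q.1.2).1).2 []).take (k * q.2)) :=
      primrec_take.to_comp.comp (hv.to_comp.comp Computable.fst)
        ((Primrec.nat_mul.comp (Primrec.const k) Primrec.snd).to_comp)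
    have hgm : Computable fun q : (ℕ × ℕ) × ℕ =>
        finv k f (((boolLists (k * (Nat.unpair (Nat.unpair q.1.2).1).1)).getD
          (Nat.unpair (Nat.unpair q.1.2).1).2 []).take (k * q.2)) :=
      (finv_computable k hk f hfc hfs).comp harg
    exact computable_list_map ((Primrec.list_range.comp (Primrec.succ.comp hN)).to_comp) hgm
  have hcond : Computable fun p : ℕ × ℕ => checkFun
      ((List.range ((Nat.unpair (Nat.unpair p.2).1).1 + 1)).map fun n =>
        finv k f (((boolLists (k * (Nat.unpair (Nat.unpair p.2).1).1)).getD
          (Nat.unpair (Nat.unpair p.2).1).2 []).take (k * n)),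
       ((List.range ((Nat.unpair p.2).2 + 1)).map fun s' => G (p.1, s')).reduceOption) :=
    primrec_checkFun.to_comp.comp (hms.pair hW)
  have := Computable.cond hcond (Computable.option_some.comp hv.to_comp)
    (Computable.const (none : Option (List Bool)))
  apply this.of_eq
  intro p
  rw [Hfun]
  exact Bool.cond_eq_if

end Stmt10Comp


set_option maxHeartbeats 1000000 in
theorem stmt10 (k : ℕ) (hk : 1 ≤ k) (f : ℕ → List (Fin (2^k)))
    (hfc : Computable f) (hfb : Function.Bijective f)
    (G : ℕ × ℕ → Option (List Bool)) (hG : Computable G) :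
    ∃ H : ℕ × ℕ → Option (List Bool), Computable H ∧ ∀ e : ℕ,
      {y : ℕ → Bool | ∀ S : List (Fin (2^k)) → Bool, y ∈ GammaS k S →
          ∃ s w, G (e, s) = some w ∧ PrefixOf w (fun m => S (f m))}
        = {y | ∃ s w, H (e, s) = some w ∧ PrefixOf w y} := by
  refine ⟨Hfun k f G, computable_Hfun k hk f hfc hfb.2 G hG, fun e => ?_⟩
  ext y
  simp only [Set.mem_setOf_eq]
  constructor
  · -- hard direction : Σ⁰₁-ness via compactness
    intro hy
    by_contra hno
    push_neg at hno
    set ystr : ℕ → List Bool := fun n => List.ofFn fun i : Fin (k * n) => y i.val with hystr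
    have hystr_len : ∀ n, (ystr n).length = k * n := fun n => by simp [hystr]
    have hystr_pref : ∀ n, PrefixOf (ystr n) y := by
      intro n i hi
      rw [hystr_len] at hi
      rw [List.getD_eq_getElem _ _ (by simpa [hystr_len n] using hi)]
      simp [hystr]
    have hystr_take : ∀ {n N : ℕ}, n ≤ N → (ystr N).take (k * n) = ystr n := by
      intro n N hnN
      refine prefixOf_unique (prefixOf_mono (List.take_prefix _ _) (hystr_pref N))
        (hystr_pref n) ?_
      rw [List.length_take, hystr_len, hystr_len]
      exact min_eq_left (Nat.mul_le_mul_left k hnN)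
    set mE : ℕ → ℕ := fun n => finv k f (ystr n) with hmE
    have hmE_spec : ∀ n, encStr k (f (mE n)) = ystr n := fun n =>
      finv_spec' k hk f hfb.2 (ystr n) n (hystr_len n)
    have hfail : ∀ j : ℕ, checkFun ((List.range (j + 1)).map mE,
        ((List.range (j + 1)).map fun s' => G (e, s')).reduceOption) = false := by
      intro j
      by_contra hc
      rw [Bool.not_eq_false] at hc
      obtain ⟨i, hi, hig⟩ := List.mem_iff_getElem.mp (mem_boolLists.mpr (hystr_len j))
      have hgetD : (boolLists (k * j)).getD i [] = ystr j := by
        rw [List.getD_eq_getElem _ _ hi, hig]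
      have hms_eq : ((List.range (j + 1)).map fun n =>
          finv k f (((boolLists (k * j)).getD i []).take (k * n)))
            = (List.range (j + 1)).map mE := by
        apply List.map_congr_left
        intro n hn
        rw [hgetD, hystr_take (Nat.lt_succ_iff.mp (List.mem_range.mp hn))]
      have hH : Hfun k f G (e, Nat.pair (Nat.pair j i) j) = some (ystr j) := by
        rw [Hfun]
        simp only [Nat.unpair_pair]
        rw [hms_eq, hc, hgetD]
        simp
      exact hno (Nat.pair (Nat.pair j i) j) (ystr j) hH (hystr_pref j)
    set C : ℕ → Set (ℕ → Bool) := fun j =>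
      {T | (∀ n ≤ j, T (mE n) = true) ∧
        ∀ s' ≤ j, ∀ w, G (e, s') = some w → ¬ PrefixOf w T} with hC
    have hCne : ∀ j, (C j).Nonempty := by
      intro j
      have hcf := hfail j
      rw [checkFun] at hcf
      obtain ⟨t, htmem, htP⟩ := List.all_eq_false.mp hcf
      rw [Bool.not_eq_true, Bool.or_eq_false_iff, Bool.not_eq_false'] at htP
      obtain ⟨hA, hB⟩ := htP
      have htlen := mem_boolLists.mp htmem
      refine ⟨fun i => t.getD i false, ?_, ?_⟩
      · intro n hn
        have hmem : mE n ∈ ((List.range (j + 1)).map mE, ((List.range (j + 1)).map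
            fun s' => G (e, s')).reduceOption).1 :=
          List.mem_map_of_mem (List.mem_range.mpr (Nat.lt_succ_of_le hn))
        exact List.all_eq_true.mp hA _ hmem
      · intro s' hs' w hw hP
        have hwW : w ∈ ((List.range (j + 1)).map fun s'' => G (e, s'')).reduceOption :=
          List.reduceOption_mem_iff.mpr
            (List.mem_map.mpr ⟨s', List.mem_range.mpr (Nat.lt_succ_of_le hs'), hw⟩)
        have hfalse := List.any_eq_false.mp hB w hwW
        have hwR : w.length ≤ maxList ((((List.range (j + 1)).map mE, ((List.range (j + 1)).map
              fun s'' => G (e, s'')).reduceOption).1).map (· + 1) ++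
            ((((List.range (j + 1)).map mE, ((List.range (j + 1)).map
              fun s'' => G (e, s'')).reduceOption).2).map List.length)) :=
          le_maxList (List.mem_append_right _ (List.mem_map.mpr ⟨w, hwW, rfl⟩))
        have htake : t.take w.length = w := by
          apply List.ext_getElem
          · rw [List.length_take, htlen]
            exact min_eq_left hwR
          · intro i' h1 h2
            have hit : i' < t.length := by
              rw [htlen]; exact lt_of_lt_of_le h2 hwR
            have hPt : t.getD i' false = w.getD i' false := hP i' h2
            rw [List.getElem_take, ← List.getD_eq_getElem t false hit, hPt,
              List.getD_eq_getElem w false h2]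
        simp [htake] at hfalse
    have hCcl : ∀ j, IsClosed (C j) := by
      intro j
      have h1 : ∀ m : ℕ, IsClosed {T : ℕ → Bool | T m = true} := by
        intro m
        have hpre : {T : ℕ → Bool | T m = true} = (fun T : ℕ → Bool => T m) ⁻¹' {true} := rfl
        rw [hpre]
        exact IsClosed.preimage (continuous_apply m) isClosed_singleton
      have h2 : ∀ w : List Bool, IsClosed {T : ℕ → Bool | ¬ PrefixOf w T} := by
        intro w
        have heq : {T : ℕ → Bool | PrefixOf w T}
            = ⋂ i ∈ Finset.range w.length, {T : ℕ → Bool | T i = w.getD i false} := by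
          ext T
          simp [PrefixOf]
        have hopen : IsOpen {T : ℕ → Bool | PrefixOf w T} := by
          rw [heq]
          refine isOpen_biInter_finset fun i _ => ?_
          have hpre : {T : ℕ → Bool | T i = w.getD i false}
              = (fun T : ℕ → Bool => T i) ⁻¹' {w.getD i false} := rfl
          rw [hpre]
          exact IsOpen.preimage (continuous_apply i) (isOpen_discrete _)
        exact hopen.isClosed_compl
      have heqC : C j = (⋂ n ∈ Set.Iic j, {T : ℕ → Bool | T (mE n) = true}) ∩
          ⋂ s' ∈ Set.Iic j, ⋂ w, ⋂ (_ : G (e, s') = some w),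
            {T : ℕ → Bool | ¬ PrefixOf w T} := by
        ext T
        simp only [hC, Set.mem_setOf_eq, Set.mem_inter_iff, Set.mem_iInter, Set.mem_Iic]
      rw [heqC]
      exact IsClosed.inter (isClosed_biInter fun n _ => h1 _)
        (isClosed_biInter fun s' _ => isClosed_iInter fun w => isClosed_iInter fun _ => h2 w)
    have hCmono : ∀ j, C (j + 1) ⊆ C j := fun j T hT =>
      ⟨fun n hn => hT.1 n (hn.trans (Nat.le_succ j)),
        fun s' hs' w hw => hT.2 s' (hs'.trans (Nat.le_succ j)) w hw⟩
    obtain ⟨T, hT⟩ := IsCompact.nonempty_iInter_of_sequence_nonempty_isCompact_isClosed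
      C hCmono hCne ((hCcl 0).isCompact) hCcl
    have hTj : ∀ j, T ∈ C j := fun j => Set.mem_iInter.mp hT j
    set S : List (Fin (2 ^ k)) → Bool := fun σ => T (Function.invFun f σ) with hSdef
    have hSf : ∀ m, S (f m) = T m := fun m =>
      congrArg T (Function.leftInverse_invFun hfb.1 m)
    have hyS : y ∈ GammaS k S := by
      rw [mem_gammaS_iff k hk]
      intro σ hpre
      have h1 : encStr k σ = ystr σ.length :=
        prefixOf_unique hpre (hystr_pref σ.length) (by rw [encStr_length, hystr_len])
      have h2 : f (mE σ.length) = σ := encStr_injective k hk (by rw [hmE_spec, h1])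
      calc S σ = S (f (mE σ.length)) := by rw [h2]
        _ = T (mE σ.length) := hSf _
        _ = true := (hTj σ.length).1 _ le_rfl
    obtain ⟨s', w, hGw, hpw⟩ := hy S hyS
    have hfe : (fun m => S (f m)) = T := funext hSf
    rw [hfe] at hpw
    exact (hTj s').2 s' le_rfl w hGw hpw
  · -- easy direction : soundness
    rintro ⟨s, v, hH, hpv⟩ S hyS
    have hS := (mem_gammaS_iff k hk S y).mp hyS
    rw [Hfun] at hH
    dsimp only at hH
    split at hH
    case isFalse => exact absurd hH (by simp)
    case isTrue hc =>
      set v₀ := (boolLists (k * (Nat.unpair (Nat.unpair s).1).1)).getD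
        (Nat.unpair (Nat.unpair s).1).2 [] with hv₀def
      obtain rfl : v₀ = v := Option.some.inj hH
      set N := (Nat.unpair (Nat.unpair s).1).1 with hNdef
      set s₀ := (Nat.unpair s).2 with hs₀def
      set ms := (List.range (N + 1)).map
        (fun n => finv k f (v₀.take (k * n))) with hmsdef
      set W := ((List.range (s₀ + 1)).map fun s' => G (e, s')).reduceOption with hWdef
      rw [checkFun] at hc
      dsimp only at hc
      set R := maxList (ms.map (· + 1) ++ W.map List.length) with hRdef
      set T : ℕ → Bool := fun m => S (f m) with hTdef
      set t := (List.range R).map T with htdef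
      have htlen : t.length = R := by simp [htdef]
      have htmem : t ∈ boolLists R := mem_boolLists.mpr htlen
      have ht_getD : ∀ {i' : ℕ}, i' < R → t.getD i' false = T i' := by
        intro i' hi'
        rw [htdef, List.getD_eq_getElem _ _ (by simpa using hi')]
        simp
      have hbody := List.all_eq_true.mp hc t htmem
      have hA : (ms.all fun m => t.getD m false) = true := by
        rw [List.all_eq_true]
        intro m hm
        have hmR : m < R := by
          have h1 : m + 1 ∈ ms.map (· + 1) := List.mem_map.mpr ⟨m, hm, rfl⟩
          have h2 := le_maxList (List.mem_append_left (W.map List.length) h1)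
          omega
        obtain ⟨n, hn, rfl⟩ := List.mem_map.mp hm
        rw [ht_getD hmR, hTdef]
        apply hS
        refine prefixOf_mono ?_ hpv
        rw [finv_spec k hk f hfb.2]
        exact (List.take_prefix _ _).trans (List.take_prefix _ _)
      have hB : (W.any fun w => decide (t.take w.length = w)) = true := by
        rw [hA] at hbody
        simpa using hbody
      obtain ⟨w, hwW, hwdec⟩ := List.any_eq_true.mp hB
      have hweq : t.take w.length = w := of_decide_eq_true hwdec
      obtain ⟨s', hs', hGs'⟩ : ∃ s', s' ∈ List.range (s₀ + 1) ∧ G (e, s') = some w := by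
        obtain ⟨s', hs', h⟩ := List.mem_map.mp (List.reduceOption_mem_iff.mp hwW)
        exact ⟨s', hs', h⟩
      refine ⟨s', w, hGs', ?_⟩
      intro i' hi'
      have hwR : w.length ≤ R :=
        le_maxList (List.mem_append_right _ (List.mem_map.mpr ⟨w, hwW, rfl⟩))
      have hiR : i' < R := lt_of_lt_of_le hi' hwR
      have hit : i' < t.length := by rw [htlen]; exact hiR
      have h1 : t.getD i' false = w.getD i' false := by
        rw [← hweq, List.getD_eq_getElem t false hit,
          List.getD_eq_getElem (t.take w.length) false
            (by rw [List.length_take]; exact lt_min hi' hit), List.getElem_take]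
      show T i' = w.getD i' false
      rw [← ht_getD hiR, h1]
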